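/- If a map g from an infinite-dimensional Banach space X to itself is compact (continuous and mapping bounded sets to relatively compact sets), then g is not surjective. -/
import Mathlib

/-- A compact (continuous, mapping bounded sets to relatively compact sets) map
from an infinite-dimensional Banach space to itself is not surjective. -/
theorem stmt_0 (X : Type*) [NormedAddCommGroup X] [NormedSpace ℝ X] [CompleteSpace X]
    (hinf : ¬ FiniteDimensional ℝ X) (g : X → X) (hg : Continuous g)
    (hcomp : ∀ s : Set X, Bornology.IsBounded s → IsCompact (closure (g '' s))) :
    ¬ Function.Surjective g := by
  intro hsurj
  apply hinf
  -- X is the union of the compact sets closure (g '' closedBall 0 n)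
  have hcover : (⋃ n : ℕ, closure (g '' Metric.closedBall (0 : X) n)) = Set.univ := by
    apply Set.eq_univ_of_forall
    intro x
    obtain ⟨y, hy⟩ := hsurj x
    obtain ⟨n, hn⟩ := exists_nat_ge ‖y‖
    exact Set.mem_iUnion.2 ⟨n, subset_closure ⟨y, by
      simpa [Metric.mem_closedBall] using hn, hy⟩⟩
  have hK : ∀ n : ℕ, IsCompact (closure (g '' Metric.closedBall (0 : X) n)) :=
    fun n => hcomp _ Metric.isBounded_closedBall
  -- Baire category: some piece has nonempty interior
  obtain ⟨n, hn⟩ : ∃ n : ℕ, (interior (closure (g '' Metric.closedBall (0 : X) n))).Nonempty := by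
    by_contra h
    push_neg at h
    have := nonempty_interior_of_iUnion_of_closed
      (fun n : ℕ => isClosed_closure (s := g '' Metric.closedBall (0 : X) n))
      hcover
    obtain ⟨n, hn⟩ := this
    exact Set.not_nonempty_empty (h n ▸ hn)
  obtain ⟨x, hx⟩ := hn
  obtain ⟨r, hr, hball⟩ := Metric.isOpen_iff.1 isOpen_interior x hx
  have hcb : IsCompact (Metric.closedBall x (r / 2)) := by
    apply (hK n).of_isClosed_subset Metric.isClosed_closedBall
    calc Metric.closedBall x (r / 2) ⊆ Metric.ball x r :=
          Metric.closedBall_subset_ball (by linarith)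
      _ ⊆ interior _ := hball
      _ ⊆ _ := interior_subset
  exact FiniteDimensional.of_isCompact_closedBall ℝ (by linarith) hcb
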